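/- The property ψ of 2-data words defined by ψ = ∀x∀y (d₁(x)=d₁(y) ↔ d₂(x)=d₂(y)) cannot be recognized by any class automaton over 2-data words. Specifically: for every work alphabet Γ, every letter-to-letter word transducer, and every class condition recognized by a morphism α into a finite monoid S, there exists a 2-data word satisfying ψ that the automaton accepts only if it also accepts some 2-data word violating ψ. -/

import Mathlib

/-- The class string of a data value `d` in a 2-data word with transducer
output `s` and data assignments `d₁, d₂`: each position is marked by whether it
carries `d` on the first and on the second attribute. -/
def classString {Γ : Type*} [Inhabited Γ] (s : List Γ) (d₁ d₂ : ℕ → ℤ) (d : ℤ) :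
    List (Γ × Bool × Bool) :=
  (List.range s.length).map fun i =>
    (s.getD i default, decide (d₁ i = d), decide (d₂ i = d))

/-- Acceptance of a 2-data word `(w, d₁, d₂)` by a class automaton with
transducer language `Tlang` (over the product alphabet) and class condition
`α⁻¹ F`: some letter-to-letter transducer output `s` is such that for every
data value, the class string belongs to the class condition. -/
def Accepts2 {A Γ S : Type*} [Inhabited Γ] (Tlang : Set (List (A × Γ)))
    (α : List (Γ × Bool × Bool) → S) (F : Set S)
    (w : List A) (d₁ d₂ : ℕ → ℤ) : Prop :=
  ∃ s : List Γ, s.length = w.length ∧ w.zip s ∈ Tlang ∧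
    ∀ d : ℤ, α (classString s d₁ d₂ d) ∈ F

/-- The 2-data word `(w, d₁, d₂)` satisfies
`ψ = ∀x∀y (d₁(x)=d₁(y) ↔ d₂(x)=d₂(y))`. -/
def SatPsi {A : Type*} (w : List A) (d₁ d₂ : ℕ → ℤ) : Prop :=
  ∀ x < w.length, ∀ y < w.length, (d₁ x = d₁ y ↔ d₂ x = d₂ y)

/-- A block of the class string: positions `a, a+1, …, a+len-1`, letter taken
from `s`, marks given by `m`. -/
def blkA {Γ : Type*} [Inhabited Γ] (s : List Γ) (m : ℕ → Bool × Bool) (a len : ℕ) :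
    List (Γ × Bool × Bool) :=
  (List.range' a len).map fun t => (s.getD t default, m t)

lemma blkA_congr {Γ : Type*} [Inhabited Γ] (s : List Γ) {m m' : ℕ → Bool × Bool}
    (a len : ℕ) (h : ∀ t, a ≤ t → t < a + len → m t = m' t) :
    blkA s m a len = blkA s m' a len := by
  unfold blkA
  apply List.map_congr_left
  intro t ht
  rw [List.mem_range'_1] at ht
  rw [h t ht.1 ht.2]

lemma blkA_split {Γ : Type*} [Inhabited Γ] (s : List Γ) (m : ℕ → Bool × Bool) (n : ℕ) :
    blkA s m 0 (2 * n) = blkA s m 0 n ++ blkA s m n n := by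
  unfold blkA
  rw [← List.map_append]
  congr 1
  have := List.range'_append (s := 0) (m := n) (n := n) (step := 1)
  simp only [Nat.zero_add, Nat.one_mul] at this
  rw [this]
  congr 1
  omega

lemma classString_eq_blkA {Γ : Type*} [Inhabited Γ] (s : List Γ) (n : ℕ)
    (hslen : s.length = 2 * n) (D1 D2 : ℕ → ℤ) (d : ℤ) :
    classString s D1 D2 d
      = blkA s (fun t => (decide (D1 t = d), decide (D2 t = d))) 0 (2 * n) := by
  unfold classString blkA
  rw [hslen, List.range_eq_range']

/-- Key decomposition: if the marks are exactly at `a < n ≤ b < 2n`, then the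
image of the class string under the morphism factorizes through the halves. -/
lemma keyD {Γ S : Type*} [Inhabited Γ] [Monoid S]
    (α : List (Γ × Bool × Bool) → S)
    (hhom : ∀ u v, α (u ++ v) = α u * α v)
    (s : List Γ) (n a b : ℕ) (ha : a < n) (hb : n ≤ b) (hb2 : b < 2 * n)
    (m : ℕ → Bool × Bool)
    (hm : ∀ t, t < 2 * n → m t = (decide (t = a ∨ t = b), false)) :
    α (blkA s m 0 (2 * n))
      = α (blkA s (fun t => (decide (t = a), false)) 0 n)
        * α (blkA s (fun t => (decide (t = b), false)) n n) := by
  rw [blkA_split, hhom]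
  congr 1
  · congr 1
    apply blkA_congr
    intro t ht0 htn
    rw [hm t (by omega)]
    have h : (t = a ∨ t = b) ↔ t = a := by omega
    simp [h]
  · congr 1
    apply blkA_congr
    intro t htn ht2
    rw [hm t (by omega)]
    have h : (t = a ∨ t = b) ↔ t = b := by omega
    simp [h]

/-- No class automaton over 2-data words recognizes `ψ`: for every work
alphabet `Γ`, letter-to-letter transducer, and class condition recognized by a
morphism `α` into a finite monoid `S`, there is a 2-data word satisfying `ψ`
which the automaton accepts only if it also accepts some 2-data word
violating `ψ`. -/
theorem stmt12 {A Γ S : Type*} [Inhabited A] [Inhabited Γ] [Fintype S] [Monoid S]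
    (Tlang : Set (List (A × Γ)))
    (α : List (Γ × Bool × Bool) → S)
    (hhom : ∀ u v, α (u ++ v) = α u * α v)
    (F : Set S) :
    ∃ (w : List A) (d₁ d₂ : ℕ → ℤ),
      SatPsi w d₁ d₂ ∧
      (Accepts2 Tlang α F w d₁ d₂ →
        ∃ (w' : List A) (d₁' d₂' : ℕ → ℤ),
          ¬ SatPsi w' d₁' d₂' ∧ Accepts2 Tlang α F w' d₁' d₂') := by
  classical
  set n : ℕ := Fintype.card S * Fintype.card S + 1 with hn
  have hn1 : 1 ≤ n := Nat.le_add_left 1 _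
  set D1 : ℕ → ℤ :=
    (fun x => if x < n then (x : ℤ) + 1 else if x < 2 * n then (x : ℤ) - n + 1 else 0)
    with hD1
  set D2 : ℕ → ℤ := (fun x => -(D1 x)) with hD2
  refine ⟨List.replicate (2 * n) default, D1, D2, ?_, ?_⟩
  · intro x _ y _
    constructor
    · intro h; rw [hD2]; simp [h]
    · intro h
      rw [hD2] at h
      simpa [neg_inj] using h
  · rintro ⟨s, hs, hzip, hcls⟩
    have hslen : s.length = 2 * n := by simpa using hs
    -- the two monoid elements associated to a value
    set L : ℕ → S := fun a => α (blkA s (fun t => (decide (t = a), false)) 0 n) with hL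
    set R : ℕ → S := fun b => α (blkA s (fun t => (decide (t = b), false)) n n) with hR
    -- value lemma
    have hval : ∀ (E1 : ℕ → ℤ) (d : ℤ) (a b : ℕ), a < n → n ≤ b → b < 2 * n →
        (∀ t, t < 2 * n → (E1 t = d ↔ (t = a ∨ t = b))) →
        (∀ t, t < 2 * n → ¬(D2 t = d)) →
        α (classString s E1 D2 d) = L a * R b := by
      intro E1 d a b ha hb hb2 h1 h2
      rw [classString_eq_blkA s n hslen]
      exact keyD α hhom s n a b ha hb hb2 _
        (fun t ht => by
          rw [decide_eq_decide.mpr (h1 t ht), decide_eq_false (h2 t ht)])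
    -- original class strings
    have h2gen : ∀ (d : ℤ), 0 < d → ∀ t, t < 2 * n → ¬(D2 t = d) := by
      intro d hd t ht
      simp only [hD2, hD1]
      split_ifs <;> omega
    have horig : ∀ k, k < n → α (classString s D1 D2 ((k : ℤ) + 1)) = L k * R (n + k) := by
      intro k hk
      refine hval D1 _ k (n + k) hk (by omega) (by omega) ?_ (h2gen _ (by omega))
      intro t ht
      simp only [hD1]
      split_ifs <;> omega
    have hF : ∀ k, k < n → L k * R (n + k) ∈ F := by
      intro k hk
      have := hcls ((k : ℤ) + 1)
      rwa [horig k hk] at this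
    -- pigeonhole
    obtain ⟨i, j, hij, hfe⟩ :=
      Fintype.exists_ne_map_eq_of_card_lt
        (fun k : Fin n => ((L k.val, R (n + k.val)) : S × S))
        (by
          rw [Fintype.card_fin, Fintype.card_prod, hn]
          omega)
    have hIJ : (i : ℕ) ≠ (j : ℕ) := fun h => hij (Fin.val_injective h)
    have hI : (i : ℕ) < n := i.isLt
    have hJ : (j : ℕ) < n := j.isLt
    have hLij : L i = L j := congrArg Prod.fst hfe
    have hRij : R (n + i) = R (n + j) := congrArg Prod.snd hfe
    -- the swapped first data assignment
    set E1 : ℕ → ℤ :=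
      (fun x => if x = (i : ℕ) then ((j : ℕ) : ℤ) + 1
        else if x = (j : ℕ) then ((i : ℕ) : ℤ) + 1 else D1 x) with hE1
    refine ⟨List.replicate (2 * n) default, E1, D2, ?_, s, hs, hzip, ?_⟩
    · -- violates ψ
      intro hsat
      have hx : (j : ℕ) < (List.replicate (2 * n) (default : A)).length := by
        simp; omega
      have hy : n + (j : ℕ) < (List.replicate (2 * n) (default : A)).length := by
        simp; omega
      have h2 : D2 (j : ℕ) = D2 (n + (j : ℕ)) := by
        simp only [hD2, hD1]
        split_ifs <;> omega
      have h1 := (hsat _ hx _ hy).mpr h2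
      simp only [hE1, hD1] at h1
      split_ifs at h1 <;> omega
    · -- acceptance of the swapped word
      intro d
      by_cases hdi : d = ((i : ℕ) : ℤ) + 1
      · subst hdi
        have heq := hval E1 (((i : ℕ) : ℤ) + 1) (j : ℕ) (n + (i : ℕ)) hJ (by omega) (by omega)
          (fun t ht => by
            simp only [hE1, hD1]
            split_ifs <;> omega)
          (h2gen _ (by omega))
        rw [heq, ← hLij]
        exact hF _ hI
      · by_cases hdj : d = ((j : ℕ) : ℤ) + 1
        · subst hdj
          have heq := hval E1 (((j : ℕ) : ℤ) + 1) (i : ℕ) (n + (j : ℕ)) hI (by omega) (by omega)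
            (fun t ht => by
              simp only [hE1, hD1]
              split_ifs <;> omega)
            (h2gen _ (by omega))
          rw [heq, hLij]
          exact hF _ hJ
        · -- unchanged class string
          have : classString s E1 D2 d = classString s D1 D2 d := by
            unfold classString
            apply List.map_congr_left
            intro t _
            simp only [Prod.mk.injEq]
            refine ⟨trivial, ?_, trivial⟩
            rw [decide_eq_decide]
            simp only [hE1, hD1]
            split_ifs <;> omega
          rw [this]
          exact hcls d
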